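/- Fix integers d, n ≥ 1, a real number λ, a real number E, a Hermitian d×d complex matrix A and Hermitian d×d complex matrices V₁, …, V_n. Define the Hermitian nd×nd matrix H acting on ψ = (ψ₁,…,ψ_n) ∈ (ℂ^d)^n by (Hψ)_k = ψ_{k+1} + ψ_{k−1} + (A + λ·V_k)·ψ_k, with the convention ψ₀ = ψ_{n+1} = 0. For k = 1,…,n define the 2d×2d transfer matrix T_k = [[E·1_d − A − λ·V_k, −1_d],[1_d, 0]]. Then E is an eigenvalue of H if and only if the determinant of the upper-left d×d block of the product T_n·T_{n−1}·⋯·T_1 is zero. -/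
import Mathlib

open Matrix

/-- `E` is an eigenvalue of the block Jacobi operator `H` iff the determinant of
the upper-left `d×d` block of the transfer matrix product `T_n ⋯ T_1`
vanishes. -/
theorem stmt_9 {d n : ℕ} (hd : 1 ≤ d) (hn : 1 ≤ n) (l E : ℝ)
    (A : Matrix (Fin d) (Fin d) ℂ) (hA : A.IsHermitian)
    (V : ℕ → Matrix (Fin d) (Fin d) ℂ) (hV : ∀ k, (V k).IsHermitian)
    (T : ℕ → Matrix (Fin d ⊕ Fin d) (Fin d ⊕ Fin d) ℂ)
    (hT : ∀ k, T k = Matrix.fromBlocks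
      ((E : ℂ) • (1 : Matrix (Fin d) (Fin d) ℂ) - A - l • V k) (-1) 1 0)
    (P : ℕ → Matrix (Fin d ⊕ Fin d) (Fin d ⊕ Fin d) ℂ)
    (hP0 : P 0 = 1) (hPk : ∀ k, P (k + 1) = T (k + 1) * P k) :
    (∃ ψ : ℕ → (Fin d → ℂ),
      ψ 0 = 0 ∧ ψ (n + 1) = 0 ∧ (∃ k ∈ Finset.Icc 1 n, ψ k ≠ 0) ∧
      ∀ k ∈ Finset.Icc 1 n,
        ψ (k + 1) + ψ (k - 1) + (A + l • V k).mulVec (ψ k) = (E : ℂ) • ψ k)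
    ↔ ((P n).toBlocks₁₁).det = 0 := by
  -- key transfer lemma
  have key : ∀ (ψ : ℕ → (Fin d → ℂ)), ψ 0 = 0 →
      ∀ k : ℕ, (∀ j ∈ Finset.Icc 1 k,
        ψ (j + 1) + ψ (j - 1) + (A + l • V j).mulVec (ψ j) = (E : ℂ) • ψ j) →
      Sum.elim (ψ (k + 1)) (ψ k) = (P k).mulVec (Sum.elim (ψ 1) 0) := by
    intro ψ hψ0 k
    induction k with
    | zero =>
      intro _
      rw [hP0, one_mulVec, hψ0]
    | succ k ih =>
      intro h
      have ihv := ih (fun j hj => h j (by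
        simp only [Finset.mem_Icc] at hj ⊢; omega))
      have hstep := h (k + 1) (by simp [Finset.mem_Icc])
      simp only [Nat.add_sub_cancel] at hstep
      have h2 : ψ (k + 1 + 1) = (E : ℂ) • ψ (k + 1) - ψ k
          - (A + l • V (k + 1)).mulVec (ψ (k + 1)) := by
        rw [← hstep]; abel
      rw [hPk, ← mulVec_mulVec, ← ihv, hT, fromBlocks_mulVec]
      simp only [Sum.elim_comp_inl, Sum.elim_comp_inr, zero_mulVec, add_zero,
        one_mulVec]
      congr 1
      rw [h2, sub_mulVec, sub_mulVec, smul_mulVec, one_mulVec,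
        neg_mulVec, one_mulVec, add_mulVec]
      abel
  constructor
  · rintro ⟨ψ, h0, hn1, ⟨k0, hk0, hψk0⟩, hrec⟩
    have hψ1 : ψ 1 ≠ 0 := by
      intro h1
      apply hψk0
      simp only [Finset.mem_Icc] at hk0
      have hv := key ψ h0 k0 (fun j hj => hrec j (by
        simp only [Finset.mem_Icc] at hj ⊢; omega))
      rw [h1] at hv
      have : (Sum.elim (0 : Fin d → ℂ) 0 : Fin d ⊕ Fin d → ℂ) = 0 := by
        funext x; cases x <;> rfl
      rw [this, mulVec_zero] at hv
      have := congrFun hv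
      funext i
      simpa using this (Sum.inr i)
    have hv := key ψ h0 n (fun j hj => hrec j hj)
    rw [← fromBlocks_toBlocks (P n), fromBlocks_mulVec] at hv
    have hker : ((P n).toBlocks₁₁).mulVec (ψ 1) = 0 := by
      funext i
      have := congrFun hv (Sum.inl i)
      simp only [Sum.elim_inl, hn1, mulVec_zero, add_zero] at this
      simpa using this.symm
    exact (Matrix.exists_mulVec_eq_zero_iff).mp ⟨ψ 1, hψ1, hker⟩
  · intro hdet
    obtain ⟨v, hv0, hv⟩ := (Matrix.exists_mulVec_eq_zero_iff).mpr hdet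
    -- build ψ by the two-term recursion
    set p : ℕ → (Fin d → ℂ) × (Fin d → ℂ) :=
      fun k => Nat.rec ((0 : Fin d → ℂ), v)
        (fun k pk => (pk.2,
          (E : ℂ) • pk.2 - pk.1 - (A + l • V (k + 1)).mulVec pk.2)) k with hp
    set ψ : ℕ → (Fin d → ℂ) := fun k => (p k).1 with hψ
    have hψsucc : ∀ k, ψ (k + 1) = (p k).2 := fun k => rfl
    have hψ0 : ψ 0 = 0 := rfl
    have hψ1 : ψ 1 = v := rfl
    have hrec : ∀ j ∈ Finset.Icc 1 n,
        ψ (j + 1) + ψ (j - 1) + (A + l • V j).mulVec (ψ j) = (E : ℂ) • ψ j := by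
      rintro j hj
      simp only [Finset.mem_Icc] at hj
      obtain ⟨m, rfl⟩ : ∃ m, j = m + 1 := ⟨j - 1, by omega⟩
      have hdef : ψ (m + 1 + 1) = (E : ℂ) • ψ (m + 1) - ψ m
          - (A + l • V (m + 1)).mulVec (ψ (m + 1)) := rfl
      rw [hdef]
      simp only [Nat.add_sub_cancel]
      abel
    refine ⟨ψ, hψ0, ?_, ⟨1, by simp [Finset.mem_Icc, hn], by rw [hψ1]; exact hv0⟩, hrec⟩
    have hvv := key ψ hψ0 n hrec
    rw [← fromBlocks_toBlocks (P n), fromBlocks_mulVec] at hvv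
    have := congrFun hvv
    funext i
    have h := this (Sum.inl i)
    rw [hψ1] at h
    simpa [hv, mulVec_zero] using h
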